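/- If A is Schur stable and X is symmetric with A X Aᵀ − X ⪯ 0, then X ⪰ 0. -/

import Mathlib

open Matrix Filter

section Aux

attribute [local instance] Matrix.linftyOpNormedRing Matrix.linftyOpNormedAlgebra

lemma aux_norm_tendsto {n : ℕ} (B : Matrix (Fin n) (Fin n) ℂ)
    (h : ∀ μ ∈ spectrum ℂ B, ‖μ‖ < 1) :
    Tendsto (fun N => ‖B ^ N‖) atTop (nhds 0) := by
  haveI : CompleteSpace (Matrix (Fin n) (Fin n) ℂ) := FiniteDimensional.complete ℂ _
  have hfin : (spectrum ℂ B).Finite := Matrix.finite_spectrum B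
  have hρ : spectralRadius ℂ B < 1 := by
    calc spectralRadius ℂ B ≤ ↑(hfin.toFinset.sup fun k => ‖k‖₊) := by
          refine iSup₂_le fun k hk => ?_
          exact_mod_cast Finset.le_sup (hfin.mem_toFinset.mpr hk)
      _ < 1 := by
          rw [← ENNReal.coe_one, ENNReal.coe_lt_coe]
          refine Finset.sup_lt_iff zero_lt_one |>.mpr fun k hk => ?_
          have := h k (hfin.mem_toFinset.mp hk)
          exact_mod_cast this
  have hgel := spectrum.pow_nnnorm_pow_one_div_tendsto_nhds_spectralRadius B
  obtain ⟨r, hr1, hr2⟩ := exists_between hρ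
  have hev : ∀ᶠ (N : ℕ) in atTop, (‖B ^ N‖₊ : ENNReal) ^ ((1 : ℝ) / (N : ℝ)) < r :=
    hgel.eventually_lt_const hr1
  have hev2 : ∀ᶠ N in atTop, (‖B ^ N‖₊ : ENNReal) < r ^ N := by
    filter_upwards [hev, eventually_ge_atTop 1] with N hN hN1
    have hNpos : (0 : ℝ) < N := by positivity
    calc (‖B ^ N‖₊ : ENNReal) = ((‖B ^ N‖₊ : ENNReal) ^ ((1 : ℝ) / N)) ^ (N : ℝ) := by
          rw [← ENNReal.rpow_mul, one_div_mul_cancel hNpos.ne', ENNReal.rpow_one]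
      _ < r ^ (N : ℝ) := ENNReal.rpow_lt_rpow hN hNpos
      _ = r ^ N := ENNReal.rpow_natCast r N
  have htend0 : Tendsto (fun N => (‖B ^ N‖₊ : ENNReal)) atTop (nhds 0) := by
    refine tendsto_of_tendsto_of_tendsto_of_le_of_le' tendsto_const_nhds
      (ENNReal.tendsto_pow_atTop_nhds_zero_of_lt_one hr2) ?_ ?_
    · exact Eventually.of_forall fun N => zero_le
    · exact hev2.mono fun N hN => hN.le
  have := (ENNReal.tendsto_coe (f := atTop) (m := fun N => ‖B ^ N‖₊) (a := 0)).mp ?_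
  · exact (NNReal.tendsto_coe).mpr this
  · simpa using htend0

lemma aux_entry_tendsto {n : ℕ} (B : Matrix (Fin n) (Fin n) ℂ)
    (h : ∀ μ ∈ spectrum ℂ B, ‖μ‖ < 1) (i j : Fin n) :
    Tendsto (fun N => (B ^ N) i j) atTop (nhds 0) := by
  refine squeeze_zero_norm (fun N => ?_) (aux_norm_tendsto B h)
  have h1 : ‖(B ^ N) i j‖₊ ≤ ∑ k, ‖(B ^ N) i k‖₊ :=
    Finset.single_le_sum (f := fun k => ‖(B ^ N) i k‖₊) (fun _ _ => zero_le) (Finset.mem_univ j)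
  have h2 : (∑ k, ‖(B ^ N) i k‖₊) ≤ Finset.univ.sup fun i => ∑ k, ‖(B ^ N) i k‖₊ :=
    Finset.le_sup (f := fun i => ∑ k, ‖(B ^ N) i k‖₊) (Finset.mem_univ i)
  have := h1.trans h2
  rw [Matrix.linfty_opNorm_def]
  exact_mod_cast this

end Aux

/-- If `A` is Schur stable and `X` is symmetric with `A X Aᵀ − X ⪯ 0`, then `X ⪰ 0`. -/
theorem stmt_2 {n : ℕ} (A X : Matrix (Fin n) (Fin n) ℝ)
    (hA : ∀ μ ∈ spectrum ℂ (A.map (Complex.ofReal)), ‖μ‖ < 1)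
    (hX : X.IsHermitian)
    (hineq : (-(A * X * Aᵀ - X)).PosSemidef) :
    X.PosSemidef := by
  have hQ : (X - A * X * Aᵀ).PosSemidef := by rwa [neg_sub] at hineq
  refine .of_dotProduct_mulVec_nonneg hX fun v => ?_
  set g : ℕ → ℝ := fun N => v ⬝ᵥ ((A ^ N * X * (A ^ N)ᵀ) *ᵥ v) with hg
  have hconj : ∀ (P M : Matrix (Fin n) (Fin n) ℝ) (w : Fin n → ℝ),
      w ⬝ᵥ ((P * M * Pᵀ) *ᵥ w) = (Pᵀ *ᵥ w) ⬝ᵥ (M *ᵥ (Pᵀ *ᵥ w)) := by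
    intro P M w
    rw [← mulVec_mulVec, ← mulVec_mulVec, dotProduct_mulVec, ← mulVec_transpose,
      dotProduct_mulVec, dotProduct_mulVec, ← mulVec_transpose]
  have hstep : ∀ N, g (N + 1) ≤ g N := by
    intro N
    have e : A ^ (N + 1) * X * (A ^ (N + 1))ᵀ = A ^ N * (A * X * Aᵀ) * (A ^ N)ᵀ := by
      rw [pow_succ, transpose_mul]
      noncomm_ring
    have hdiff : A ^ N * X * (A ^ N)ᵀ - A ^ (N + 1) * X * (A ^ (N + 1))ᵀ
        = A ^ N * (X - A * X * Aᵀ) * (A ^ N)ᵀ := by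
      rw [e]; noncomm_ring
    have h1 : g N - g (N + 1)
        = ((A ^ N)ᵀ *ᵥ v) ⬝ᵥ ((X - A * X * Aᵀ) *ᵥ ((A ^ N)ᵀ *ᵥ v)) := by
      rw [hg]
      simp only []
      rw [← dotProduct_sub, ← Matrix.sub_mulVec, hdiff, hconj]
    have h2 : 0 ≤ g N - g (N + 1) := by
      rw [h1]
      simpa using hQ.dotProduct_mulVec_nonneg ((A ^ N)ᵀ *ᵥ v)
    linarith
  have hanti : Antitone g := antitone_nat_of_succ_le hstep
  have hg0 : g 0 = v ⬝ᵥ X *ᵥ v := by simp [hg]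
  have hBA : ∀ i j, Filter.Tendsto (fun N => (A ^ N) i j) Filter.atTop (nhds 0) := by
    intro i j
    have hmap : ∀ N : ℕ, ((A.map Complex.ofReal) ^ N) i j = ((A ^ N) i j : ℂ) := by
      intro N
      have : (A.map Complex.ofReal) ^ N = (A ^ N).map Complex.ofReal := by
        have := map_pow (Complex.ofRealHom.mapMatrix) A N
        exact this.symm
      simp [this]
    have h0 := aux_entry_tendsto (A.map Complex.ofReal) hA i j
    simp only [hmap] at h0
    have := h0.norm
    simp only [Complex.norm_real] at this
    refine squeeze_zero_norm (fun N => le_of_eq rfl) ?_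
    simpa using this
  have hAtend : Filter.Tendsto (fun N => A ^ N) Filter.atTop (nhds 0) := by
    refine tendsto_pi_nhds.mpr ?_
    intro i
    rw [tendsto_pi_nhds]
    intro j
    simpa using hBA i j
  have hcont : Continuous fun M : Matrix (Fin n) (Fin n) ℝ => v ⬝ᵥ ((M * X * Mᵀ) *ᵥ v) :=
    continuous_const.dotProduct
      (((continuous_id.matrix_mul continuous_const).matrix_mul
        continuous_id.matrix_transpose).matrix_mulVec continuous_const)
  have hgtend : Filter.Tendsto g Filter.atTop (nhds 0) := by
    have h := (hcont.tendsto 0).comp hAtend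
    simpa [hg, Function.comp_def, Matrix.transpose_pow] using h
  have h0le : (0 : ℝ) ≤ g 0 := le_of_tendsto' hgtend fun N => hanti (Nat.zero_le N)
  rw [hg0] at h0le
  simpa using h0le
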